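/- (Proposition 3.10) Let Ω : ℤ⁴ → Cl be a discrete form satisfying the discrete Dirac–Kähler equation iDΩ = mΩ, and suppose Ω(k) = A(k) + i·B(k) pointwise with A and B real-valued forms. Define Ω₊ := A − B·e and Ω₋ := A + B·e. Then Ω = ½(Ω₊ + Ω₋) + (i/2)(Ω₊ − Ω₋)e; moreover the real-valued forms Ω₋ and Ω₋e satisfy equation (3.17): −DΩ₋ = mΩ₋e and −D(Ω₋e) = m(Ω₋e)e, while the real-valued forms Ω₊ and Ω₊e satisfy the same equation with the sign of the mass term reversed: −DΩ₊ = −mΩ₊e and −D(Ω₊e) = −m(Ω₊e)e. -/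

import Mathlib

noncomputable section

/-- The Minkowski quadratic form `Q v = v₀² − v₁² − v₂² − v₃²` on `ℂ⁴`. -/
def Q : QuadraticForm ℂ (Fin 4 → ℂ) :=
  QuadraticMap.weightedSumSquares ℂ ![(1 : ℂ), -1, -1, -1]

/-- The Clifford algebra of spacetime over `ℂ`. -/
abbrev Cl : Type := CliffordAlgebra Q

/-- The generators `e_μ`, images of the standard basis vectors. -/
def e (μ : Fin 4) : Cl := CliffordAlgebra.ι Q (Pi.single μ 1)

/-- The volume element `e = e₀e₁e₂e₃`. -/
def eV : Cl := e 0 * e 1 * e 2 * e 3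

/-- The difference operator `(Δ_μ Ω)(k) = Ω(k + 1_μ) − Ω(k)`. -/
def Δ (μ : Fin 4) (Ω : (Fin 4 → ℤ) → Cl) : (Fin 4 → ℤ) → Cl :=
  fun k => Ω (k + Pi.single μ 1) - Ω k

/-- The discrete Dirac operator `DΩ = Σ_μ e_μ · (Δ_μ Ω)`. -/
def Dirac (Ω : (Fin 4 → ℤ) → Cl) : (Fin 4 → ℤ) → Cl :=
  fun k => ∑ μ : Fin 4, e μ * Δ μ Ω k

lemma Q_single (μ : Fin 4) : Q (Pi.single μ 1) = ![(1:ℂ),-1,-1,-1] μ := by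
  fin_cases μ <;>
    simp [Q, QuadraticMap.weightedSumSquares_apply, Fin.sum_univ_four, Pi.single_apply]

lemma e_sq (μ : Fin 4) : e μ * e μ = algebraMap ℂ Cl (![(1:ℂ),-1,-1,-1] μ) := by
  rw [e, CliffordAlgebra.ι_sq_scalar, Q_single]

lemma e_anti {μ ν : Fin 4} (h : μ ≠ ν) : e ν * e μ = -(e μ * e ν) := by
  have : e μ * e ν + e ν * e μ = algebraMap ℂ Cl (QuadraticMap.polar Q (Pi.single μ 1) (Pi.single ν 1)) :=
    CliffordAlgebra.ι_mul_ι_add_swap _ _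
  have hp : QuadraticMap.polar Q (Pi.single μ 1) (Pi.single ν 1) = 0 := by
    fin_cases μ <;> fin_cases ν <;> first
      | exact absurd rfl h
      | simp [QuadraticMap.polar, Q, QuadraticMap.weightedSumSquares_apply, Fin.sum_univ_four,
          Pi.single_apply]
  rw [hp, map_zero] at this
  have h2 : e ν * e μ + e μ * e ν = 0 := by rw [add_comm]; exact this
  exact eq_neg_of_add_eq_zero_left h2

-- sorted-product rewriting lemmas for computing eV * eV
lemma sw (μ ν : Fin 4) (h : μ ≠ ν) (x : Cl) : e ν * (e μ * x) = -(e μ * (e ν * x)) := by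
  rw [← mul_assoc, e_anti h, neg_mul, mul_assoc]

lemma sq0 (x : Cl) : e 0 * (e 0 * x) = x := by
  rw [← mul_assoc, e_sq]; simp

lemma sq1 (x : Cl) : e 1 * (e 1 * x) = -x := by
  rw [← mul_assoc, e_sq]; simp [Algebra.algebraMap_eq_smul_one]

lemma sq2 (x : Cl) : e 2 * (e 2 * x) = -x := by
  rw [← mul_assoc, e_sq]; simp [Algebra.algebraMap_eq_smul_one]

lemma sq3 (x : Cl) : e 3 * (e 3 * x) = -x := by
  rw [← mul_assoc, e_sq]; simp [Algebra.algebraMap_eq_smul_one]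

lemma eV_sq : eV * eV = -1 := by
  have s10 : ∀ x : Cl, e 1 * (e 0 * x) = -(e 0 * (e 1 * x)) := fun x => sw 0 1 (by decide) x
  have s20 : ∀ x : Cl, e 2 * (e 0 * x) = -(e 0 * (e 2 * x)) := fun x => sw 0 2 (by decide) x
  have s30 : ∀ x : Cl, e 3 * (e 0 * x) = -(e 0 * (e 3 * x)) := fun x => sw 0 3 (by decide) x
  have s21 : ∀ x : Cl, e 2 * (e 1 * x) = -(e 1 * (e 2 * x)) := fun x => sw 1 2 (by decide) x
  have s31 : ∀ x : Cl, e 3 * (e 1 * x) = -(e 1 * (e 3 * x)) := fun x => sw 1 3 (by decide) x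
  have s32 : ∀ x : Cl, e 3 * (e 2 * x) = -(e 2 * (e 3 * x)) := fun x => sw 2 3 (by decide) x
  have e33 : e 3 * e 3 = -1 := by rw [e_sq]; simp [Algebra.algebraMap_eq_smul_one]
  have e22 : e 2 * e 2 = -1 := by rw [e_sq]; simp [Algebra.algebraMap_eq_smul_one]
  have e11 : e 1 * e 1 = -1 := by rw [e_sq]; simp [Algebra.algebraMap_eq_smul_one]
  have e00 : e 0 * e 0 = 1 := by rw [e_sq]; simp
  simp only [eV, mul_assoc, mul_neg, neg_mul, neg_neg, s10, s20, s30, s21, s31, s32,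
    sq0, sq1, sq2, sq3, e33, e22, e11, e00, mul_one, mul_neg_one]


-- Real form of the Clifford algebra
def Qr : QuadraticForm ℝ (Fin 4 → ℝ) :=
  QuadraticMap.weightedSumSquares ℝ ![(1 : ℝ), -1, -1, -1]

abbrev Clr : Type := CliffordAlgebra Qr

def gr (μ : Fin 4) : Clr := CliffordAlgebra.ι Qr (Pi.single μ 1)

lemma Qr_single (μ : Fin 4) : Qr (Pi.single μ 1) = ![(1:ℝ),-1,-1,-1] μ := by
  fin_cases μ <;>
    simp [Qr, QuadraticMap.weightedSumSquares_apply, Fin.sum_univ_four, Pi.single_apply]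

lemma gr_sq (μ : Fin 4) : gr μ * gr μ = algebraMap ℝ Clr (![(1:ℝ),-1,-1,-1] μ) := by
  rw [gr, CliffordAlgebra.ι_sq_scalar, Qr_single]

lemma gr_anti {μ ν : Fin 4} (h : μ ≠ ν) : gr ν * gr μ = -(gr μ * gr ν) := by
  have key : gr μ * gr ν + gr ν * gr μ
      = algebraMap ℝ Clr (QuadraticMap.polar Qr (Pi.single μ 1) (Pi.single ν 1)) :=
    CliffordAlgebra.ι_mul_ι_add_swap _ _
  have hp : QuadraticMap.polar Qr (Pi.single μ 1) (Pi.single ν 1) = 0 := by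
    fin_cases μ <;> fin_cases ν <;> first
      | exact absurd rfl h
      | simp [QuadraticMap.polar, Qr, QuadraticMap.weightedSumSquares_apply, Fin.sum_univ_four,
          Pi.single_apply]
  rw [hp, map_zero] at key
  have h2 : gr ν * gr μ + gr μ * gr ν = 0 := by rw [add_comm]; exact key
  exact eq_neg_of_add_eq_zero_left h2

-- the ℝ-linear map (Fin 4 → ℝ) → Cl, w ↦ ι Q (coe ∘ w)
def gmap : (Fin 4 → ℝ) →ₗ[ℝ] Cl :=
  ((CliffordAlgebra.ι Q).restrictScalars ℝ).comp
    (LinearMap.pi fun μ => (Algebra.linearMap ℝ ℂ).comp (LinearMap.proj μ))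

lemma gmap_apply (w : Fin 4 → ℝ) : gmap w = CliffordAlgebra.ι Q (fun μ => (w μ : ℂ)) := rfl

lemma Q_coe (w : Fin 4 → ℝ) : Q (fun μ => (w μ : ℂ)) = ((Qr w : ℝ) : ℂ) := by
  simp only [Q, Qr, QuadraticMap.weightedSumSquares_apply, Fin.sum_univ_four,
    Matrix.cons_val_zero, Matrix.cons_val_one, Matrix.head_cons, Matrix.cons_val_two,
    Matrix.tail_cons, Matrix.cons_val_three, smul_eq_mul]
  push_cast
  ring

lemma gmap_sq (w : Fin 4 → ℝ) : gmap w * gmap w = algebraMap ℝ Cl (Qr w) := by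
  rw [gmap_apply, CliffordAlgebra.ι_sq_scalar, Q_coe, IsScalarTower.algebraMap_apply ℝ ℂ Cl]
  rfl

/-- The ℝ-algebra map `Clr →ₐ[ℝ] Cl`. -/
def jmap : Clr →ₐ[ℝ] Cl := CliffordAlgebra.lift Qr ⟨gmap, gmap_sq⟩

lemma jmap_gr (μ : Fin 4) : jmap (gr μ) = e μ := by
  rw [jmap, gr, CliffordAlgebra.lift_ι_apply, gmap_apply, e]
  congr 1
  funext ν
  by_cases h : ν = μ <;> simp [Pi.single_apply, h]

open TensorProduct in
/-- base vectors in the tensor product -/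
def u (μ : Fin 4) : ℂ ⊗[ℝ] Clr := (1 : ℂ) ⊗ₜ[ℝ] gr μ

open TensorProduct in
def fmap : (Fin 4 → ℂ) →ₗ[ℂ] ℂ ⊗[ℝ] Clr :=
  ∑ μ : Fin 4, (LinearMap.toSpanSingleton ℂ (ℂ ⊗[ℝ] Clr) (u μ)).comp (LinearMap.proj μ)

lemma fmap_apply (v : Fin 4 → ℂ) :
    fmap v = v 0 • u 0 + v 1 • u 1 + v 2 • u 2 + v 3 • u 3 := by
  simp [fmap, Fin.sum_univ_four, LinearMap.toSpanSingleton_apply]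

open TensorProduct in
lemma u_mul_u (μ ν : Fin 4) : u μ * u ν = (1 : ℂ) ⊗ₜ[ℝ] (gr μ * gr ν) := by
  simp [u, Algebra.TensorProduct.tmul_mul_tmul]

open TensorProduct in
lemma fmap_sq (v : Fin 4 → ℂ) : fmap v * fmap v = algebraMap ℂ (ℂ ⊗[ℝ] Clr) (Q v) := by
  have hsw : ∀ (μ ν : Fin 4), μ ≠ ν → u ν * u μ = -(u μ * u ν) := by
    intro μ ν h
    rw [u_mul_u, u_mul_u, gr_anti h, TensorProduct.tmul_neg]
  have hsq : ∀ μ : Fin 4, u μ * u μ = (![(1:ℝ),-1,-1,-1] μ : ℂ) • (1 : ℂ ⊗[ℝ] Clr) := by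
    intro μ
    rw [u_mul_u, gr_sq, Algebra.algebraMap_eq_smul_one, TensorProduct.tmul_smul]
    rw [Algebra.TensorProduct.one_def]
    rw [← algebraMap_smul ℂ (![(1:ℝ),-1,-1,-1] μ) ((1:ℂ) ⊗ₜ[ℝ] (1:Clr))]
    norm_num
  rw [fmap_apply, Algebra.algebraMap_eq_smul_one]
  have hQ : Q v = v 0 * v 0 - v 1 * v 1 - v 2 * v 2 - v 3 * v 3 := by
    simp only [Q, QuadraticMap.weightedSumSquares_apply, Fin.sum_univ_four,
      Matrix.cons_val_zero, Matrix.cons_val_one, Matrix.head_cons, Matrix.cons_val_two,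
      Matrix.tail_cons, Matrix.cons_val_three, smul_eq_mul]
    ring
  rw [hQ]
  have h10 := hsw 0 1 (by decide); have h20 := hsw 0 2 (by decide)
  have h30 := hsw 0 3 (by decide); have h21 := hsw 1 2 (by decide)
  have h31 := hsw 1 3 (by decide); have h32 := hsw 2 3 (by decide)
  have q0 := hsq 0; have q1 := hsq 1; have q2 := hsq 2; have q3 := hsq 3
  simp only [Matrix.cons_val_zero, Matrix.cons_val_one, Matrix.head_cons, Matrix.cons_val_two,
    Matrix.tail_cons, Matrix.cons_val_three] at q0 q1 q2 q3
  simp only [add_mul, mul_add, smul_mul_assoc, mul_smul_comm, h10, h20, h30, h21, h31, h32,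
    q0, q1, q2, q3, smul_neg, smul_smul]
  push_cast
  module

open TensorProduct in
def Fmap : Cl →ₐ[ℂ] ℂ ⊗[ℝ] Clr := CliffordAlgebra.lift Q ⟨fmap, fmap_sq⟩

lemma Fmap_e (μ : Fin 4) : Fmap (e μ) = u μ := by
  rw [Fmap, e, CliffordAlgebra.lift_ι_apply, fmap_apply]
  fin_cases μ <;> simp [Pi.single_apply]

open TensorProduct in
lemma Fmap_jmap (a : Clr) : Fmap (jmap a) = (1 : ℂ) ⊗ₜ[ℝ] a := by
  have : ((Fmap.restrictScalars ℝ).comp jmap : Clr →ₐ[ℝ] ℂ ⊗[ℝ] Clr)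
      = Algebra.TensorProduct.includeRight := by
    apply CliffordAlgebra.hom_ext
    apply LinearMap.ext
    intro w
    have hw : w = ∑ μ : Fin 4, w μ • (Pi.single μ 1 : Fin 4 → ℝ) := by
      funext ν
      simp only [Finset.sum_apply, Pi.smul_apply, Pi.single_apply, smul_eq_mul,
        Fin.sum_univ_four]
      fin_cases ν <;> simp
    simp only [LinearMap.comp_apply, AlgHom.toLinearMap_apply, AlgHom.coe_comp,
      AlgHom.coe_restrictScalars, Function.comp_apply]
    rw [hw]
    simp only [map_sum, map_smul]
    congr 1
    funext μ
    have h1 : jmap (CliffordAlgebra.ι Qr (Pi.single μ 1)) = e μ := jmap_gr μ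
    have h2 : (AlgHom.restrictScalars ℝ Fmap) (e μ) = u μ := Fmap_e μ
    rw [map_smul, map_smul, h1, h2, u]
    rfl
  have := congrArg (fun φ => φ a) (congrArg AlgHom.toLinearMap this)
  simpa using this

lemma R_le_range : Algebra.adjoin ℝ (Set.range e) ≤ jmap.range := by
  apply Algebra.adjoin_le
  rintro _ ⟨μ, rfl⟩
  exact ⟨gr μ, jmap_gr μ⟩

open TensorProduct in
def π1 : ℂ ⊗[ℝ] Clr →ₗ[ℝ] Clr :=
  TensorProduct.lift ((LinearMap.lsmul ℝ Clr).comp Complex.reLm)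

open TensorProduct in
def π2 : ℂ ⊗[ℝ] Clr →ₗ[ℝ] Clr :=
  TensorProduct.lift ((LinearMap.lsmul ℝ Clr).comp Complex.imLm)

/-- Separation of real and imaginary parts. -/
lemma real_sep {x y : Cl} (hx : x ∈ Algebra.adjoin ℝ (Set.range e))
    (hy : y ∈ Algebra.adjoin ℝ (Set.range e))
    (h : x + Complex.I • y = 0) : x = 0 ∧ y = 0 := by
  obtain ⟨a, ha⟩ := R_le_range hx
  obtain ⟨b, hb⟩ := R_le_range hy
  subst ha hb
  have h2 : Fmap (jmap a) + Complex.I • Fmap (jmap b) = 0 := by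
    have := congrArg Fmap h
    simpa using this
  rw [Fmap_jmap, Fmap_jmap, TensorProduct.smul_tmul', smul_eq_mul, mul_one] at h2
  have ha0 : a = 0 := by
    have := congrArg π1 h2
    simpa [π1, Complex.reLm] using this
  have hb0 : b = 0 := by
    have := congrArg π2 h2
    simpa [π2, Complex.imLm] using this
  subst ha0 hb0
  simp

lemma Dirac_add (X Y : (Fin 4 → ℤ) → Cl) (k : Fin 4 → ℤ) :
    Dirac (fun k => X k + Y k) k = Dirac X k + Dirac Y k := by
  simp only [Dirac, Δ, ← Finset.sum_add_distrib]
  apply Finset.sum_congr rfl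
  intro μ _
  noncomm_ring

lemma Dirac_sub (X Y : (Fin 4 → ℤ) → Cl) (k : Fin 4 → ℤ) :
    Dirac (fun k => X k - Y k) k = Dirac X k - Dirac Y k := by
  simp only [Dirac, Δ, ← Finset.sum_sub_distrib]
  apply Finset.sum_congr rfl
  intro μ _
  noncomm_ring

lemma Dirac_smul (c : ℂ) (X : (Fin 4 → ℤ) → Cl) (k : Fin 4 → ℤ) :
    Dirac (fun k => c • X k) k = c • Dirac X k := by
  simp only [Dirac, Δ, Finset.smul_sum, ← smul_sub, mul_smul_comm]

lemma Dirac_mulr (c : Cl) (X : (Fin 4 → ℤ) → Cl) (k : Fin 4 → ℤ) :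
    Dirac (fun k => X k * c) k = Dirac X k * c := by
  simp only [Dirac, Δ, Finset.sum_mul, sub_mul, mul_assoc]

lemma Dirac_mem (X : (Fin 4 → ℤ) → Cl) (hX : ∀ k, X k ∈ Algebra.adjoin ℝ (Set.range e))
    (k : Fin 4 → ℤ) : Dirac X k ∈ Algebra.adjoin ℝ (Set.range e) := by
  apply Subalgebra.sum_mem
  intro μ _
  exact Subalgebra.mul_mem _ (Algebra.subset_adjoin ⟨μ, rfl⟩)
    (Subalgebra.sub_mem _ (hX _) (hX _))

/-- Proposition 3.10: a solution `Ω = A + iB` of the discrete Dirac–Kähler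
equation `iDΩ = mΩ` satisfies `Ω = ½(Ω₊+Ω₋) + (i/2)(Ω₊−Ω₋)e`, where the
real-valued forms `Ω₋ = A + Be` and `Ω₋e` satisfy equation (3.17):
`−DΩ = mΩe`, while the real-valued forms `Ω₊ = A − Be` and `Ω₊e` satisfy the
same equation with the sign of the mass term reversed. -/
theorem stmt_18 (m : ℝ) (Ω A B : (Fin 4 → ℤ) → Cl)
    (hΩeq : ∀ k, Complex.I • Dirac Ω k = (m : ℂ) • Ω k)
    (hA : ∀ k, A k ∈ Algebra.adjoin ℝ (Set.range e))
    (hB : ∀ k, B k ∈ Algebra.adjoin ℝ (Set.range e))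
    (hΩ : ∀ k, Ω k = A k + Complex.I • B k) :
    (∀ k, Ω k = (2⁻¹ : ℂ) • ((A k - B k * eV) + (A k + B k * eV))
        + (Complex.I / 2) • (((A k - B k * eV) - (A k + B k * eV)) * eV)) ∧
    (∀ k, (A k + B k * eV) ∈ Algebra.adjoin ℝ (Set.range e)) ∧
    (∀ k, (A k - B k * eV) ∈ Algebra.adjoin ℝ (Set.range e)) ∧
    (∀ k, -(Dirac (fun k => A k + B k * eV) k) =
      (m : ℂ) • ((A k + B k * eV) * eV)) ∧
    (∀ k, -(Dirac (fun k => (A k + B k * eV) * eV) k) =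
      (m : ℂ) • (((A k + B k * eV) * eV) * eV)) ∧
    (∀ k, -(Dirac (fun k => A k - B k * eV) k) =
      -((m : ℂ) • ((A k - B k * eV) * eV))) ∧
    (∀ k, -(Dirac (fun k => (A k - B k * eV) * eV) k) =
      -((m : ℂ) • (((A k - B k * eV) * eV) * eV))) := by
  -- eV is real
  have heVR : eV ∈ Algebra.adjoin ℝ (Set.range e) := by
    refine Subalgebra.mul_mem _ (Subalgebra.mul_mem _ (Subalgebra.mul_mem _ ?_ ?_) ?_) ?_ <;>
      exact Algebra.subset_adjoin ⟨_, rfl⟩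
  -- Dirac of Ω decomposes
  have hD : ∀ k, Dirac Ω k = Dirac A k + Complex.I • Dirac B k := by
    intro k
    have : Ω = fun k => A k + Complex.I • B k := funext hΩ
    rw [this, Dirac_add, Dirac_smul]
  -- the key real equations
  have key : ∀ k, Dirac A k = (m : ℂ) • B k ∧ -(Dirac B k) = (m : ℂ) • A k := by
    intro k
    have h := hΩeq k
    rw [hD k, hΩ k] at h
    have aux : (-(Dirac B k) - (m : ℂ) • A k) + Complex.I • (Dirac A k - (m : ℂ) • B k)
        = Complex.I • (Dirac A k + Complex.I • Dirac B k)
          - (m : ℂ) • (A k + Complex.I • B k) := by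
      match_scalars <;> simp <;> ring
    rw [h, sub_self] at aux
    have hre : (m:ℂ) • A k ∈ Algebra.adjoin ℝ (Set.range e) := by
      rw [show ((m:ℂ) • A k) = m • A k from algebraMap_smul ℂ m (A k)]
      exact Subalgebra.smul_mem _ (hA k) m
    have him : (m:ℂ) • B k ∈ Algebra.adjoin ℝ (Set.range e) := by
      rw [show ((m:ℂ) • B k) = m • B k from algebraMap_smul ℂ m (B k)]
      exact Subalgebra.smul_mem _ (hB k) m
    have hsep := real_sep
      (Subalgebra.sub_mem _ (Subalgebra.neg_mem _ (Dirac_mem B hB k)) hre)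
      (Subalgebra.sub_mem _ (Dirac_mem A hA k) him) aux
    constructor
    · have := hsep.2; rwa [sub_eq_zero] at this
    · have := hsep.1; rwa [sub_eq_zero] at this
  have hAk : ∀ k, Dirac A k = (m : ℂ) • B k := fun k => (key k).1
  have hBk : ∀ k, Dirac B k = -((m : ℂ) • A k) := fun k => by rw [← (key k).2, neg_neg]
  refine ⟨?_, ?_, ?_, ?_, ?_, ?_, ?_⟩
  · intro k
    have h1 : (A k - B k * eV - (A k + B k * eV)) * eV = -(B k * (eV * eV)) - B k * (eV * eV) := by
      noncomm_ring
    rw [hΩ k, h1, eV_sq, mul_neg_one, neg_neg]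
    module
  · intro k; exact Subalgebra.add_mem _ (hA k) (Subalgebra.mul_mem _ (hB k) heVR)
  · intro k; exact Subalgebra.sub_mem _ (hA k) (Subalgebra.mul_mem _ (hB k) heVR)
  · intro k
    rw [Dirac_add, Dirac_mulr, hAk, hBk]
    simp only [add_mul, sub_mul, neg_mul, smul_mul_assoc, mul_assoc, eV_sq, mul_neg_one,
      mul_neg, mul_one, neg_neg, smul_neg, smul_add, smul_sub, neg_add_rev, neg_sub]
    try abel
  · intro k
    rw [Dirac_mulr, Dirac_add, Dirac_mulr, hAk, hBk]
    simp only [add_mul, sub_mul, neg_mul, smul_mul_assoc, mul_assoc, eV_sq, mul_neg_one,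
      mul_neg, mul_one, neg_neg, smul_neg, smul_add, smul_sub, neg_add_rev, neg_sub]
    try abel
  · intro k
    rw [Dirac_sub, Dirac_mulr, hAk, hBk]
    simp only [add_mul, sub_mul, neg_mul, smul_mul_assoc, mul_assoc, eV_sq, mul_neg_one,
      mul_neg, mul_one, neg_neg, smul_neg, smul_add, smul_sub, neg_add_rev, neg_sub]
    try abel
  · intro k
    rw [Dirac_mulr, Dirac_sub, Dirac_mulr, hAk, hBk]
    simp only [add_mul, sub_mul, neg_mul, smul_mul_assoc, mul_assoc, eV_sq, mul_neg_one,
      mul_neg, mul_one, neg_neg, smul_neg, smul_add, smul_sub, neg_add_rev, neg_sub]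
    try abel
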